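/- For any finite alphabet Σ_q with q ≥ 4, and any irreducible string u of length n-1 over Σ_q (a string containing no tandem repeat vv with |v| ≤ 3), there exist at least q-2 symbols a ∈ Σ_q such that the string ua of length n is also irreducible. -/

import Mathlib

/-- A string (over `ℕ`, representing symbols of `Σ_q`) is irreducible if it contains
no tandem repeat `v ++ v` with `v` nonempty of length at most 3. -/
def Irred (x : List ℕ) : Prop :=
  ∀ u v w : List ℕ, x = u ++ v ++ v ++ w → v.length ≤ 3 → v = []

lemma bad_cases (u : List ℕ) (hu : Irred u) (a : ℕ) (h : ¬ Irred (u ++ [a])) :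
    a = (u.reverse[0]?).getD 0 ∨
      a = (if u.reverse[0]? = u.reverse[2]? then (u.reverse[1]?).getD 0
           else (u.reverse[2]?).getD 0) := by
  unfold Irred at h
  push_neg at h
  obtain ⟨p, v, w, hx, hlen, hv⟩ := h
  -- first show w = []
  have hw : w = [] := by
    by_contra hw
    have hsplit : w = w.dropLast ++ [w.getLast hw] := (List.dropLast_append_getLast hw).symm
    rw [hsplit] at hx
    have hx' : u ++ [a] = (p ++ v ++ v ++ w.dropLast) ++ [w.getLast hw] := by
      rw [hx]; simp
    have := List.append_inj' hx' rfl
    exact hv (hu p v w.dropLast (by rw [this.1]) hlen)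
  subst hw
  simp only [List.append_nil] at hx
  have hr : a :: u.reverse = v.reverse ++ (v.reverse ++ p.reverse) := by
    have := congrArg List.reverse hx
    simpa using this
  have hvlen : v.reverse.length ≤ 3 := by simpa using hlen
  have hvne : v.reverse ≠ [] := by simpa using hv
  match hm : v.reverse, hvlen, hvne with
  | [x], _, _ =>
    rw [hm] at hr
    simp only [List.cons_append, List.nil_append, List.cons.injEq] at hr
    obtain ⟨rfl, hr2⟩ := hr
    left
    rw [hr2]; simp
  | [x, y], _, _ =>
    rw [hm] at hr
    simp only [List.cons_append, List.nil_append, List.cons.injEq] at hr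
    obtain ⟨rfl, hr2⟩ := hr
    right
    rw [hr2]; simp
  | [x, y, z], _, _ =>
    rw [hm] at hr
    simp only [List.cons_append, List.nil_append, List.cons.injEq] at hr
    obtain ⟨rfl, hr2⟩ := hr
    right
    rw [hr2]
    by_cases hc : y = a
    · -- then u contains adjacent equal symbols, contradiction
      subst hc
      have hind : u = (p ++ [z]) ++ [y] ++ [y] ++ ([z] ++ [y]) := by
        have := congrArg List.reverse hr2
        simp at this
        rw [this]; simp
      have := hu (p ++ [z]) [y] ([z] ++ [y]) hind (by simp)
      simp at this
    · simp [hc]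
  | [], _, hn => exact absurd rfl hn
  | _::_::_::_::_, hl, _ => simp at hl; omega

/-- For `q ≥ 4` and any irreducible string `u` of length `n - 1` over `Σ_q`, there are
at least `q - 2` symbols `a ∈ Σ_q` such that `u ++ [a]` (of length `n`) is irreducible. -/
theorem stmt0 (q n : ℕ) (hq : 4 ≤ q) (u : List ℕ)
    (hu_len : u.length = n - 1) (hu_alpha : ∀ c ∈ u, c < q) (hu_irr : Irred u) :
    q - 2 ≤ Set.ncard {a : ℕ | a < q ∧ Irred (u ++ [a])} := by
  set b1 := (u.reverse[0]?).getD 0 with hb1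
  set b2 := (if u.reverse[0]? = u.reverse[2]? then (u.reverse[1]?).getD 0
             else (u.reverse[2]?).getD 0) with hb2
  have hsub : ↑(Finset.range q \ {b1, b2}) ⊆ {a : ℕ | a < q ∧ Irred (u ++ [a])} := by
    intro a ha
    simp only [Finset.coe_sdiff, Finset.coe_range, Set.mem_diff, Set.mem_Iio,
      Finset.coe_insert, Finset.coe_singleton, Set.mem_insert_iff, Set.mem_singleton_iff,
      not_or] at ha
    obtain ⟨haq, h1, h2⟩ := ha
    refine ⟨haq, ?_⟩
    by_contra hbad
    rcases bad_cases u hu_irr a hbad with h | h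
    · exact h1 h
    · exact h2 h
  have hfin : {a : ℕ | a < q ∧ Irred (u ++ [a])}.Finite :=
    (Set.finite_Iio q).subset (fun a ha => ha.1)
  have h1 : ((Finset.range q \ {b1, b2}) : Finset ℕ).card ≤
      Set.ncard {a : ℕ | a < q ∧ Irred (u ++ [a])} := by
    rw [← Set.ncard_coe_finset]
    exact Set.ncard_le_ncard hsub hfin
  have h2 : q - 2 ≤ (Finset.range q \ ({b1, b2} : Finset ℕ)).card := by
    have h3 := Finset.le_card_sdiff ({b1, b2} : Finset ℕ) (Finset.range q)
    have hc : ({b1, b2} : Finset ℕ).card ≤ 2 := by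
      have := Finset.card_insert_le b1 ({b2} : Finset ℕ)
      simpa using this
    simp only [Finset.card_range] at h3
    omega
  omega
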